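/- Let x be a real number with x ≥ 2 and let k be a positive integer. Then |log(1 - x^{-k})| > Σ_{j>k} |log(1 - x^{-j})|. -/
import Mathlib

open Real

/-- Strict concavity of `log` gives: `-log (1 - l*t) < l * (-log (1 - t))`. -/
lemma log_one_sub_mul_lt {t l : ℝ} (ht0 : 0 < t) (ht1 : t < 1) (hl0 : 0 < l) (hl1 : l < 1) :
    -Real.log (1 - l * t) < l * (-Real.log (1 - t)) := by
  have h := strictConcaveOn_log_Ioi.2 (x := 1 - t) (y := 1)
    (Set.mem_Ioi.2 (by linarith)) (Set.mem_Ioi.2 one_pos)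
    (by intro h; nlinarith) hl0 (by linarith : (0:ℝ) < 1 - l) (by ring)
  simp only [smul_eq_mul, Real.log_one, mul_zero, add_zero, mul_one] at h
  have heq : l * (1 - t) + (1 - l) = 1 - l * t := by ring
  rw [heq] at h
  linarith

theorem log_tail_inequality (x : ℝ) (hx : 2 ≤ x) (k : ℕ) (hk : 0 < k) :
    ∑' j : ℕ, |Real.log (1 - (x ^ (k + 1 + j))⁻¹)| < |Real.log (1 - (x ^ k)⁻¹)| := by
  have hx0 : (0:ℝ) < x := by linarith
  have hx1 : (1:ℝ) < x := by linarith
  set t : ℝ := (x ^ k)⁻¹ with ht_def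
  have hxk : (1:ℝ) < x ^ k := one_lt_pow₀ hx1 hk.ne'
  have ht0 : 0 < t := by positivity
  have ht1 : t < 1 := by
    rw [ht_def]; exact inv_lt_one_of_one_lt₀ hxk
  have hlogneg : Real.log (1 - t) < 0 := Real.log_neg (by linarith) (by linarith)
  have hL0 : 0 < -Real.log (1 - t) := by linarith
  have habsL : |Real.log (1 - t)| = -Real.log (1 - t) := abs_of_neg hlogneg
  set L : ℝ := -Real.log (1 - t) with hL_def
  -- the comparison sequence
  set g : ℕ → ℝ := fun j => (x⁻¹) ^ (j + 1) * L with hg_def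
  have hr0 : (0:ℝ) < x⁻¹ := by positivity
  have hr1 : x⁻¹ < 1 := by
    rw [inv_lt_one_iff₀]; right; exact hx1
  have hrhalf : x⁻¹ ≤ 1 / 2 := by
    rw [inv_le_comm₀ hx0 (by norm_num)]; linarith
  -- pointwise bounds
  have key : ∀ j : ℕ, |Real.log (1 - (x ^ (k + 1 + j))⁻¹)| < g j := by
    intro j
    have hlj0 : (0:ℝ) < (x⁻¹) ^ (j + 1) := by positivity
    have hlj1 : (x⁻¹) ^ (j + 1) < 1 :=
      pow_lt_one₀ hr0.le hr1 (Nat.succ_ne_zero j)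
    have hsplit : (x ^ (k + 1 + j))⁻¹ = (x⁻¹) ^ (j + 1) * t := by
      rw [ht_def, ← inv_pow, ← inv_pow, ← pow_add]
      congr 1
      omega
    have harg0 : 0 < (x⁻¹) ^ (j + 1) * t := by positivity
    have harg1 : (x⁻¹) ^ (j + 1) * t < 1 := by
      calc (x⁻¹) ^ (j + 1) * t < 1 * 1 := by
            apply mul_lt_mul' hlj1.le ht1 ht0.le one_pos
      _ = 1 := by ring
    have habs : |Real.log (1 - (x ^ (k + 1 + j))⁻¹)|
        = -Real.log (1 - (x⁻¹) ^ (j + 1) * t) := by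
      rw [hsplit]
      exact abs_of_neg (Real.log_neg (by linarith) (by linarith))
    rw [habs, hg_def]
    exact log_one_sub_mul_lt ht0 ht1 hlj0 hlj1
  -- summability of g and its sum
  have hgsum : Summable g := by
    apply Summable.mul_right
    exact (summable_geometric_of_lt_one hr0.le hr1).comp_injective (add_left_injective 1)
  have hgval : ∑' j, g j = x⁻¹ * (1 - x⁻¹)⁻¹ * L := by
    rw [hg_def]
    rw [tsum_mul_right]
    congr 1
    have : ∀ j : ℕ, (x⁻¹) ^ (j + 1) = x⁻¹ * (x⁻¹) ^ j := fun j => by ring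
    simp_rw [this]
    rw [tsum_mul_left, tsum_geometric_of_lt_one hr0.le hr1]
  have hgle : ∑' j, g j ≤ L := by
    rw [hgval]
    have h1 : (1:ℝ) - x⁻¹ > 0 := by linarith
    have : x⁻¹ * (1 - x⁻¹)⁻¹ ≤ 1 := by
      rw [mul_inv_le_iff₀ h1, one_mul]
      linarith
    nlinarith
  calc ∑' j : ℕ, |Real.log (1 - (x ^ (k + 1 + j))⁻¹)| < ∑' j, g j :=
        Summable.tsum_lt_tsum_of_nonneg (fun b => abs_nonneg _) (fun b => (key b).le)
          (key 0) hgsum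
    _ ≤ L := hgle
    _ = |Real.log (1 - (x ^ k)⁻¹)| := by rw [← habsL]
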